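/- arXiv:2005.03062 — 2 statements merged into one kernel-verified Lean document; each statement's English description precedes it below -/
import Mathlib

section
/- Let g be a positive definite metric on a vector space T compatible with complex structures I and J, K a 2-form with KJ = -J*K, and define the variations İ = 0, J̇ = (1/2)[I,J]g^{-1}K, ġ = -(1/2)[K,I] (where [K,I] = KI - I*K : T → T*). Then the Poisson tensor σ = (1/2)[I,J]g^{-1} has vanishing derivative: σ̇ = (1/2)(İJ + IJ̇ - J̇I - Jİ)g^{-1} + (1/2)[I,J] g^{-1} [K,I] g^{-1} = 0. -/
/-- Under the canonical variation `İ = 0`, `J̇ = (1/2)[I,J]g⁻¹K`, `ġ = -(1/2)[K,I]`,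
the Poisson tensor `σ = (1/2)[I,J]g⁻¹` has vanishing derivative. -/
theorem stmt8 (T : Type*) [AddCommGroup T] [Module ℝ T] [FiniteDimensional ℝ T]
    (g K : T →ₗ[ℝ] Module.Dual ℝ T) (I J : Module.End ℝ T)
    (gi : Module.Dual ℝ T →ₗ[ℝ] T)
    (hI : I * I = -1) (hJ : J * J = -1)
    (hgsymm : ∀ x y : T, g x y = g y x)
    (hgpos : ∀ x : T, x ≠ 0 → 0 < g x x)
    (hIg : I.dualMap ∘ₗ g ∘ₗ (I : T →ₗ[ℝ] T) = g)
    (hJg : J.dualMap ∘ₗ g ∘ₗ (J : T →ₗ[ℝ] T) = g)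
    (hKskew : ∀ x y : T, K x y = - K y x)
    (hK11 : K ∘ₗ (J : T →ₗ[ℝ] T) = -(J.dualMap ∘ₗ K))
    (hgi1 : g ∘ₗ gi = LinearMap.id) (hgi2 : gi ∘ₗ g = LinearMap.id)
    -- the variation
    (gdot : T →ₗ[ℝ] Module.Dual ℝ T) (Idot Jdot : Module.End ℝ T)
    (hgdot : gdot = (-(1/2 : ℝ)) • (K ∘ₗ (I : T →ₗ[ℝ] T) - I.dualMap ∘ₗ K))
    (hIdot : Idot = 0)
    (hJdot : (Jdot : T →ₗ[ℝ] T)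
      = (1/2 : ℝ) • (((I * J - J * I : Module.End ℝ T) : T →ₗ[ℝ] T) ∘ₗ gi ∘ₗ K)) :
    -- σ̇ = (1/2)(İJ + IJ̇ - J̇I - Jİ)g⁻¹ - (1/2)[I,J] g⁻¹ ġ g⁻¹ = 0
    (1/2 : ℝ) • (((Idot * J + I * Jdot - Jdot * I - J * Idot : Module.End ℝ T) : T →ₗ[ℝ] T) ∘ₗ gi)
      - (1/2 : ℝ) • (((I * J - J * I : Module.End ℝ T) : T →ₗ[ℝ] T) ∘ₗ gi ∘ₗ gdot ∘ₗ gi)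
      = 0 := by
  subst hIdot hgdot
  have hII : ∀ x : T, I (I x) = -x := by
    intro x
    have h3 := congrArg (fun f : Module.End ℝ T => f x) hI
    simpa [Module.End.mul_apply] using h3
  -- I* g = -(g I) pointwise
  have hIgpt : ∀ x : T, I.dualMap (g x) = -(g (I x)) := by
    intro x
    have h1 := LinearMap.congr_fun hIg (I x)
    simp only [LinearMap.comp_apply] at h1
    rw [hII x, map_neg, map_neg] at h1
    exact neg_eq_iff_eq_neg.mp h1
  have h4 : ∀ x : T, gi (g x) = x := fun x => by
    simpa using LinearMap.congr_fun hgi2 x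
  -- gi I* = -(I gi) pointwise
  have hgiI : ∀ f : Module.Dual ℝ T, gi (I.dualMap f) = -(I (gi f)) := by
    intro f
    have hgf : g (gi f) = f := by simpa using LinearMap.congr_fun hgi1 f
    rw [← hgf, hIgpt, map_neg, h4]; rw [h4]
  ext f
  simp only [LinearMap.sub_apply, LinearMap.smul_apply, LinearMap.comp_apply,
    LinearMap.add_apply, LinearMap.zero_apply, Module.End.mul_apply, hJdot, hgiI,
    LinearMap.zero_comp, LinearMap.comp_zero, LinearMap.neg_apply, map_neg, map_sub,
    map_smul, map_zero]
  simp only [map_neg, map_sub, hII]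
  module
end

section
/- Let g be a metric compatible with complex structures I and J, ω_I = gI, ω_J = gJ, and K a skew 2-form with J*KJ = K. Then g(ω_I^{-1} - ω_J^{-1})K + K(ω_I^{-1} + ω_J^{-1})g = -(KI - I*K), i.e. the induced metric variation ġ = (1/2)g(ω_I^{-1}-ω_J^{-1})K + (1/2)K(ω_I^{-1}+ω_J^{-1})g equals -(1/2)[K,I]. -/
/-- The induced metric variation: for `K` skew of type `(1,1)` for `J`,
`g(ω_I⁻¹ - ω_J⁻¹)K + K(ω_I⁻¹ + ω_J⁻¹)g = -(KI - I*K)`, i.e. `ġ = -(1/2)[K,I]`. -/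
theorem stmt19 (T : Type*) [AddCommGroup T] [Module ℝ T] [FiniteDimensional ℝ T]
    (g K : T →ₗ[ℝ] Module.Dual ℝ T) (I J : Module.End ℝ T)
    (wIi wJi : Module.Dual ℝ T →ₗ[ℝ] T)
    (hI : I * I = -1) (hJ : J * J = -1)
    (hgsymm : ∀ x y : T, g x y = g y x)
    (hgpos : ∀ x : T, x ≠ 0 → 0 < g x x)
    (hIg : I.dualMap ∘ₗ g ∘ₗ (I : T →ₗ[ℝ] T) = g)
    (hJg : J.dualMap ∘ₗ g ∘ₗ (J : T →ₗ[ℝ] T) = g)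
    (hKskew : ∀ x y : T, K x y = - K y x)
    (hK11 : K ∘ₗ (J : T →ₗ[ℝ] T) = -(J.dualMap ∘ₗ K))
    (hwIi1 : (g ∘ₗ (I : T →ₗ[ℝ] T)) ∘ₗ wIi = LinearMap.id)
    (hwIi2 : wIi ∘ₗ (g ∘ₗ (I : T →ₗ[ℝ] T)) = LinearMap.id)
    (hwJi1 : (g ∘ₗ (J : T →ₗ[ℝ] T)) ∘ₗ wJi = LinearMap.id)
    (hwJi2 : wJi ∘ₗ (g ∘ₗ (J : T →ₗ[ℝ] T)) = LinearMap.id) :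
    g ∘ₗ (wIi - wJi) ∘ₗ K + K ∘ₗ (wIi + wJi) ∘ₗ g
      = -(K ∘ₗ (I : T →ₗ[ℝ] T) - I.dualMap ∘ₗ K) := by
  have hII : ∀ x : T, I (I x) = -x := fun x => by
    have := congrFun (congrArg (DFunLike.coe) hI) x
    simpa [Module.End.mul_apply] using this
  have hJJ : ∀ x : T, J (J x) = -x := fun x => by
    have := congrFun (congrArg (DFunLike.coe) hJ) x
    simpa [Module.End.mul_apply] using this
  -- g I = - I* g pointwise
  have hgI : ∀ x : T, g (I x) = - I.dualMap (g x) := by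
    intro x
    have h := congrFun (congrArg (DFunLike.coe) hIg) (I x)
    simp only [LinearMap.coe_comp, Function.comp_apply] at h
    rw [hII] at h
    rw [map_neg] at h
    rw [← h]; simp
  have hgJ : ∀ x : T, g (J x) = - J.dualMap (g x) := by
    intro x
    have h := congrFun (congrArg (DFunLike.coe) hJg) (J x)
    simp only [LinearMap.coe_comp, Function.comp_apply] at h
    rw [hJJ] at h
    rw [map_neg] at h
    rw [← h]; simp
  have hIdd : ∀ f : Module.Dual ℝ T, I.dualMap (I.dualMap f) = -f := by
    intro f; ext x
    simp [LinearMap.dualMap_apply, hII x]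
  have hJdd : ∀ f : Module.Dual ℝ T, J.dualMap (J.dualMap f) = -f := by
    intro f; ext x
    simp [LinearMap.dualMap_apply, hJJ x]
  -- g ∘ wIi = I*
  have hgwIi : ∀ f : Module.Dual ℝ T, g (wIi f) = I.dualMap f := by
    intro f
    have h := congrFun (congrArg (DFunLike.coe) hwIi1) f
    simp only [LinearMap.coe_comp, Function.comp_apply, LinearMap.id_coe, id_eq] at h
    rw [hgI] at h
    have := congrArg I.dualMap h
    rw [map_neg, hIdd] at this
    rw [← this]; simp
  have hgwJi : ∀ f : Module.Dual ℝ T, g (wJi f) = J.dualMap f := by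
    intro f
    have h := congrFun (congrArg (DFunLike.coe) hwJi1) f
    simp only [LinearMap.coe_comp, Function.comp_apply, LinearMap.id_coe, id_eq] at h
    rw [hgJ] at h
    have := congrArg J.dualMap h
    rw [map_neg, hJdd] at this
    rw [← this]; simp
  -- wIi ∘ g = -I
  have hwIig : ∀ x : T, wIi (g x) = - I x := by
    intro x
    have h := congrFun (congrArg (DFunLike.coe) hwIi2) (I x)
    simp only [LinearMap.coe_comp, Function.comp_apply, LinearMap.id_coe, id_eq] at h
    rw [hII] at h
    simpa [map_neg] using congrArg Neg.neg h
  have hwJig : ∀ x : T, wJi (g x) = - J x := by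
    intro x
    have h := congrFun (congrArg (DFunLike.coe) hwJi2) (J x)
    simp only [LinearMap.coe_comp, Function.comp_apply, LinearMap.id_coe, id_eq] at h
    rw [hJJ] at h
    simpa [map_neg] using congrArg Neg.neg h
  have hKJ : ∀ x : T, K (J x) = - J.dualMap (K x) := by
    intro x
    have h := congrFun (congrArg (DFunLike.coe) hK11) x
    simpa using h
  ext x y
  simp only [LinearMap.add_apply, LinearMap.coe_comp, Function.comp_apply,
    LinearMap.sub_apply, LinearMap.neg_apply, map_sub, map_add]
  rw [hgwIi, hgwJi, hwIig, hwJig]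
  simp only [map_neg, LinearMap.neg_apply, hKJ]
  ring
end
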